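/- arXiv:2210.04946 — 6 statements merged into one kernel-verified Lean document; each statement's English description precedes it below -/
import Mathlib

section
/- For every real p ∈ (0,1) and every real α with 0 ≤ α ≤ min{p/2, (1−p)/2}, one has (1 − α/(1−p))^{(1−p)/p} ≥ (1 − α/p)·(1 − α²/(p(1−p))), where the left-hand side denotes the real power of the positive base 1 − α/(1−p) with real exponent (1−p)/p. -/
lemma key_exp (u : ℝ) (h0 : 0 ≤ u) (h : u ≤ 1/2) :
    Real.exp (-(u + u^2)) ≤ 1 - u := by
  have h1 : (0:ℝ) < 1 - u := by linarith
  have hq := Real.quadratic_le_exp_of_nonneg (x := u + u^2) (by nlinarith)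
  rw [Real.exp_neg]
  rw [inv_le_comm₀ (Real.exp_pos _) h1] -- maybe wrong name
  calc (1 - u)⁻¹ ≤ 1 + (u + u^2) + (u + u^2)^2 / 2 := by
        rw [inv_le_iff_one_le_mul₀ h1]; nlinarith
    _ ≤ Real.exp (u + u^2) := hq

/-- For every real `p ∈ (0,1)` and every real `α` with `0 ≤ α ≤ min {p/2, (1−p)/2}`,
`(1 − α/(1−p))^((1−p)/p) ≥ (1 − α/p)·(1 − α²/(p(1−p)))`, where the left-hand side is a
real power of the positive base `1 − α/(1−p)`. -/
theorem stmt_1 (p α : ℝ) (hp0 : 0 < p) (hp1 : p < 1)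
    (hα0 : 0 ≤ α) (hα : α ≤ min (p/2) ((1-p)/2)) :
    (1 - α/p) * (1 - α^2 / (p*(1-p))) ≤ (1 - α/(1-p)) ^ ((1-p)/p) := by
  have h1p : (0:ℝ) < 1 - p := by linarith
  have hα1 : α ≤ p/2 := le_trans hα (min_le_left _ _)
  have hα2 : α ≤ (1-p)/2 := le_trans hα (min_le_right _ _)
  set u := α/(1-p) with hu
  have hu0 : 0 ≤ u := div_nonneg hα0 h1p.le
  have hu2 : u ≤ 1/2 := by
    rw [hu, div_le_iff₀ h1p]; linarith
  have he : 0 ≤ (1-p)/p := div_nonneg h1p.le hp0.le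
  have hkey := key_exp u hu0 hu2
  have hrpow : Real.exp (-(u + u^2)) ^ ((1-p)/p) ≤ (1 - u) ^ ((1-p)/p) :=
    Real.rpow_le_rpow (Real.exp_pos _).le hkey he
  have hex : Real.exp (-(u + u^2)) ^ ((1-p)/p)
      = Real.exp (-(α/p)) * Real.exp (-(α^2/(p*(1-p)))) := by
    rw [← Real.exp_mul, ← Real.exp_add]
    congr 1
    rw [hu]
    field_simp
    ring
  have h1 : 1 - α/p ≤ Real.exp (-(α/p)) := by
    have := Real.add_one_le_exp (-(α/p)); linarith
  have h2 : 1 - α^2/(p*(1-p)) ≤ Real.exp (-(α^2/(p*(1-p)))) := by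
    have := Real.add_one_le_exp (-(α^2/(p*(1-p)))); linarith
  have hn1 : 0 ≤ 1 - α/p := by
    rw [sub_nonneg, div_le_one hp0]; linarith
  have hn2 : 0 ≤ 1 - α^2/(p*(1-p)) := by
    rw [sub_nonneg, div_le_one (by positivity)]; nlinarith
  calc (1 - α/p) * (1 - α^2 / (p*(1-p)))
      ≤ Real.exp (-(α/p)) * Real.exp (-(α^2/(p*(1-p)))) :=
        mul_le_mul h1 h2 hn2 (Real.exp_pos _).le
    _ = Real.exp (-(u + u^2)) ^ ((1-p)/p) := hex.symm
    _ ≤ (1 - u) ^ ((1-p)/p) := hrpow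
end

section
/- Let p ∈ (0,1), θ ∈ (0,1), and let t⋆ > 0 be a real number. Set d′ = 128, d = e⁴, α = √(p(1−p)·ln(1/θ)/(d′·t⋆)) and ε = √(2·p(1−p)·t⋆·ln(d/θ)). Assume α ≤ p/2 and α ≤ (1−p)/2. Then for all integers K, T with 0 ≤ K ≤ T ≤ t⋆ and |p·T − K| ≤ ε, one has (1 + α/p)^K · (1 − α/(1−p))^{T−K} ≥ θ/e⁴. -/
lemma log_one_add_ge (x : ℝ) (hx : 0 ≤ x) : x - x^2 ≤ Real.log (1+x) := by
  have h1 : 0 < 1 + x := by linarith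
  have h := Real.log_le_sub_one_of_pos (show 0 < (1+x)⁻¹ by positivity)
  rw [Real.log_inv] at h
  have h2 : 1 - (1+x)⁻¹ ≤ Real.log (1+x) := by linarith
  have key : (x - x^2) * (1+x) ≤ x := by nlinarith [pow_nonneg hx 3]
  have h3 : x - x^2 ≤ x/(1+x) := (le_div_iff₀ h1).mpr key
  have h4 : x/(1+x) = 1 - (1+x)⁻¹ := by field_simp; ring
  linarith

lemma log_one_sub_ge (y : ℝ) (hy0 : 0 ≤ y) (hy : y ≤ 1/2) :
    -y - 2*y^2 ≤ Real.log (1-y) := by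
  have h1 : 0 < 1 - y := by linarith
  have h := Real.log_le_sub_one_of_pos (show 0 < (1-y)⁻¹ by positivity)
  rw [Real.log_inv] at h
  have h2 : 1 - (1-y)⁻¹ ≤ Real.log (1-y) := by linarith
  have key : y ≤ (y + 2*y^2) * (1-y) := by nlinarith [sq_nonneg y]
  have h3 : y/(1-y) ≤ y + 2*y^2 := (div_le_iff₀ h1).mpr key
  have h4 : y/(1-y) = (1-y)⁻¹ - 1 := by field_simp; ring
  linarith

lemma key_arith (p q L tstar ε X Y K T : ℝ)
    (hp : 0 < p) (hq : 0 < q) (hpq : p + q = 1) (hL : 0 < L)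
    (hX0 : 0 ≤ X) (hX : X ≤ 1/2) (hY0 : 0 ≤ Y) (hY : Y ≤ 1/2)
    (hε : 0 ≤ ε)
    (h1 : p*X = q*Y) (h2 : 128*tstar*(X*Y) = L)
    (h3 : X*ε ≤ q*(L+2)/8) (h4 : Y*ε ≤ p*(L+2)/8)
    (hK0 : 0 ≤ K) (hKT : K ≤ T) (hT : T ≤ tstar)
    (hd1 : p*T - K ≤ ε) (hd2 : -ε ≤ p*T - K) :
    -L - 4 ≤ K*(X - X^2) + (T-K)*(-Y - 2*Y^2) := by
  have hT0 : 0 ≤ T := le_trans hK0 hKT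
  have hXY0 : 0 ≤ X*Y := mul_nonneg hX0 hY0
  -- first-order term
  have e1 : q*(K*X - (T-K)*Y) = X*(K - p*T) := by
    linear_combination (T-K)*h1 + K*X*hpq
  have e2 : -(X*ε) ≤ X*(K - p*T) := by
    have h := mul_nonneg hX0 (by linarith : (0:ℝ) ≤ K - p*T + ε)
    have hexp : X*(K - p*T + ε) = X*(K - p*T) + X*ε := by ring
    linarith
  have t1 : -((L+2)/8) ≤ K*X - (T-K)*Y := by
    have hq' : q * (-((L+2)/8)) ≤ q * (K*X - (T-K)*Y) := by
      rw [e1]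
      have : q*(-((L+2)/8)) = -(q*(L+2)/8) := by ring
      linarith
    have := le_of_mul_le_mul_left hq' hq
    linarith
  -- second-order term
  have a1 : K*X^2 ≤ p*T*X^2 + ε*X^2 := by
    have h := mul_nonneg (by linarith : (0:ℝ) ≤ p*T + ε - K) (sq_nonneg X)
    have hexp : (p*T + ε - K)*X^2 = p*T*X^2 + ε*X^2 - K*X^2 := by ring
    linarith
  have a2 : 2*(T-K)*Y^2 ≤ 2*q*T*Y^2 + 2*ε*Y^2 := by
    have hqT : (0:ℝ) ≤ q*T + ε - (T-K) := by nlinarith [hpq, hd1]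
    have h := mul_nonneg hqT (sq_nonneg Y)
    have hexp : (q*T + ε - (T-K))*Y^2 = q*T*Y^2 + ε*Y^2 - (T-K)*Y^2 := by ring
    linarith
  have hpX2 : p*X^2 = q*(X*Y) := by linear_combination X*h1
  have hqY2 : q*Y^2 = p*(X*Y) := by linear_combination (-Y)*h1
  have eb : p*T*X^2 + 2*q*T*Y^2 = (1+p)*(T*(X*Y)) := by
    linear_combination T*hpX2 + 2*T*hqY2 + (T*(X*Y))*hpq
  have b1 : p*T*X^2 + 2*q*T*Y^2 ≤ L/64 := by
    rw [eb]
    have hTXY : T*(X*Y) ≤ tstar*(X*Y) := mul_le_mul_of_nonneg_right hT hXY0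
    have hp1 : p ≤ 1 := by linarith
    have hTXY0 : 0 ≤ T*(X*Y) := mul_nonneg hT0 hXY0
    have hpA : p*(T*(X*Y)) ≤ 1*(T*(X*Y)) := mul_le_mul_of_nonneg_right hp1 hTXY0
    have hexp : (1+p)*(T*(X*Y)) = T*(X*Y) + p*(T*(X*Y)) := by ring
    have h128 : 128*(tstar*(X*Y)) = L := by linear_combination h2
    linarith
  have b2 : ε*X^2 ≤ ε*X/2 := by
    have h := mul_le_mul_of_nonneg_left (mul_le_mul_of_nonneg_left hX hX0) hε
    calc ε*X^2 = ε*(X*X) := by ring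
      _ ≤ ε*(X*(1/2)) := h
      _ = ε*X/2 := by ring
  have b3 : 2*ε*Y^2 ≤ ε*Y := by
    have h := mul_le_mul_of_nonneg_left (mul_le_mul_of_nonneg_left hY hY0) hε
    calc 2*ε*Y^2 = 2*(ε*(Y*Y)) := by ring
      _ ≤ 2*(ε*(Y*(1/2))) := by linarith
      _ = ε*Y := by ring
  have b4 : ε*X/2 + ε*Y ≤ (L+2)/8 := by
    have hsum : q*(L+2) + p*(L+2) = (L+2) := by linear_combination (L+2)*hpq
    have hq2 : 0 ≤ q*(L+2) := mul_nonneg hq.le (by linarith)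
    have hc1 : ε*X = X*ε := mul_comm ε X
    have hc2 : ε*Y = Y*ε := mul_comm ε Y
    linarith
  have t2 : K*X^2 + 2*(T-K)*Y^2 ≤ L/64 + (L+2)/8 := by linarith
  have expand : K*(X - X^2) + (T-K)*(-Y - 2*Y^2)
      = (K*X - (T-K)*Y) - (K*X^2 + 2*(T-K)*Y^2) := by ring
  rw [expand]
  linarith

/-- Deterministic likelihood-ratio lower bound from Lemma `prob of wrong`. -/
theorem stmt_2 (p θ tstar : ℝ) (hp0 : 0 < p) (hp1 : p < 1)
    (hθ0 : 0 < θ) (hθ1 : θ < 1) (ht : 0 < tstar)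
    (α ε : ℝ)
    (hα : α = Real.sqrt (p * (1-p) * Real.log (1/θ) / (128 * tstar)))
    (hε : ε = Real.sqrt (2 * p * (1-p) * tstar * Real.log (Real.exp 4 / θ)))
    (hαp : α ≤ p/2) (hαq : α ≤ (1-p)/2) :
    ∀ K T : ℕ, K ≤ T → (T : ℝ) ≤ tstar → |p * T - K| ≤ ε →
      θ / Real.exp 4 ≤ (1 + α/p) ^ K * (1 - α/(1-p)) ^ (T - K) := by
  intro K T hKT hTt hdev
  set q : ℝ := 1 - p with hqdef
  have hq : 0 < q := by simp only [hqdef]; linarith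
  set L : ℝ := Real.log (1/θ) with hLdef
  have hL : 0 < L := Real.log_pos ((one_lt_div hθ0).mpr hθ1)
  have hLθ : Real.log θ = -L := by
    rw [hLdef, one_div, Real.log_inv]; ring
  have hMlog : Real.log (Real.exp 4 / θ) = 4 + L := by
    rw [Real.log_div (Real.exp_ne_zero 4) hθ0.ne', Real.log_exp, hLθ]; ring
  have hargα : 0 ≤ p * (1-p) * L / (128 * tstar) := by positivity
  have hα0 : 0 < α := by
    rw [hα]
    apply Real.sqrt_pos.mpr
    have : 0 < p * (1-p) * L := by positivity
    positivity
  have hα2 : α^2 = p * q * L / (128 * tstar) := by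
    rw [hα, Real.sq_sqrt hargα]
  have hε0 : 0 ≤ ε := by rw [hε]; exact Real.sqrt_nonneg _
  have hε2 : ε^2 = 2 * p * q * tstar * (4 + L) := by
    rw [hε, hMlog, Real.sq_sqrt (by positivity)]
  have hαε : α * ε ≤ p * q * (L+2) / 8 := by
    have hsq : (α * ε)^2 = p^2 * q^2 * (L * (4 + L)) / 64 := by
      rw [mul_pow, hα2, hε2]
      field_simp
      ring
    have hLM : L * (4 + L) ≤ (L + 2)^2 := by nlinarith [sq_nonneg L]
    have hrhs : 0 ≤ p * q * (L+2) / 8 := by positivity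
    have hsq2 : (α * ε)^2 ≤ (p * q * (L+2) / 8)^2 := by
      rw [hsq]
      have h64 : (0:ℝ) ≤ p^2*q^2/64 := by positivity
      calc p^2 * q^2 * (L*(4+L)) / 64 = (p^2*q^2/64) * (L*(4+L)) := by ring
        _ ≤ (p^2*q^2/64) * (L+2)^2 := mul_le_mul_of_nonneg_left hLM h64
        _ = (p * q * (L+2) / 8)^2 := by ring
    exact le_of_pow_le_pow_left₀ two_ne_zero hrhs hsq2
  set X : ℝ := α / p with hXdef
  set Y : ℝ := α / q with hYdef
  have hX0 : 0 ≤ X := by positivity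
  have hY0 : 0 ≤ Y := by positivity
  have hX : X ≤ 1/2 := by rw [hXdef, div_le_iff₀ hp0]; linarith
  have hY : Y ≤ 1/2 := by rw [hYdef, div_le_iff₀ hq]; linarith
  have h1 : p * X = q * Y := by
    rw [hXdef, hYdef, mul_div_cancel₀ _ hp0.ne', mul_div_cancel₀ _ hq.ne']
  have h2 : 128 * tstar * (X * Y) = L := by
    have : X * Y = α^2 / (p * q) := by
      rw [hXdef, hYdef]; field_simp
    rw [this, hα2]
    field_simp
  have h3 : X * ε ≤ q * (L+2) / 8 := by
    have hx : X * ε = (α * ε) / p := by rw [hXdef]; ring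
    rw [hx, div_le_iff₀ hp0]
    calc α * ε ≤ p * q * (L+2) / 8 := hαε
      _ = q * (L+2) / 8 * p := by ring
  have h4 : Y * ε ≤ p * (L+2) / 8 := by
    have hy : Y * ε = (α * ε) / q := by rw [hYdef]; ring
    rw [hy, div_le_iff₀ hq]
    calc α * ε ≤ p * q * (L+2) / 8 := hαε
      _ = p * (L+2) / 8 * q := by ring
  -- cast facts
  have hKr : (0:ℝ) ≤ (K:ℝ) := Nat.cast_nonneg K
  have hKTr : (K:ℝ) ≤ (T:ℝ) := Nat.cast_le.mpr hKT
  obtain ⟨hd2, hd1⟩ := abs_le.mp hdev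
  -- main arithmetic
  have harith : -L - 4 ≤ (K:ℝ)*(X - X^2) + ((T:ℝ)-(K:ℝ))*(-Y - 2*Y^2) :=
    key_arith p q L tstar ε X Y (K:ℝ) (T:ℝ) hp0 hq (by ring) hL hX0 hX hY0 hY
      hε0 h1 h2 h3 h4 hKr hKTr hTt (by linarith) (by linarith)
  -- exponential bounds
  have hx_exp : Real.exp (X - X^2) ≤ 1 + X := by
    have := log_one_add_ge X hX0
    calc Real.exp (X - X^2) ≤ Real.exp (Real.log (1+X)) := Real.exp_le_exp.mpr this
      _ = 1 + X := Real.exp_log (by linarith)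
  have hy_exp : Real.exp (-Y - 2*Y^2) ≤ 1 - Y := by
    have := log_one_sub_ge Y hY0 hY
    calc Real.exp (-Y - 2*Y^2) ≤ Real.exp (Real.log (1-Y)) := Real.exp_le_exp.mpr this
      _ = 1 - Y := Real.exp_log (by linarith)
  have hpow1 : Real.exp ((K:ℝ) * (X - X^2)) ≤ (1 + X) ^ K := by
    rw [Real.exp_nat_mul]
    exact pow_le_pow_left₀ (Real.exp_pos _).le hx_exp K
  have hmcast : ((T - K : ℕ) : ℝ) = (T:ℝ) - (K:ℝ) := by
    exact Nat.cast_sub hKT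
  have hpow2 : Real.exp (((T:ℝ)-(K:ℝ)) * (-Y - 2*Y^2)) ≤ (1 - Y) ^ (T - K) := by
    rw [← hmcast, Real.exp_nat_mul]
    exact pow_le_pow_left₀ (Real.exp_pos _).le hy_exp (T - K)
  have hprod : Real.exp ((K:ℝ)*(X - X^2) + ((T:ℝ)-(K:ℝ))*(-Y - 2*Y^2))
      ≤ (1 + X) ^ K * (1 - Y) ^ (T - K) := by
    rw [Real.exp_add]
    exact mul_le_mul hpow1 hpow2 (Real.exp_pos _).le (by positivity)
  have hlhs : θ / Real.exp 4 = Real.exp (Real.log θ - 4) := by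
    rw [Real.exp_sub, Real.exp_log hθ0]
  calc θ / Real.exp 4 = Real.exp (Real.log θ - 4) := hlhs
    _ ≤ Real.exp ((K:ℝ)*(X - X^2) + ((T:ℝ)-(K:ℝ))*(-Y - 2*Y^2)) := by
        apply Real.exp_le_exp.mpr; rw [hLθ]; linarith
    _ ≤ (1 + X) ^ K * (1 - Y) ^ (T - K) := hprod
    _ = (1 + α/p) ^ K * (1 - α/(1-p)) ^ (T - K) := by rw [hXdef, hYdef, hqdef]
end

section
/- Let X be a real-valued random variable on a probability space and let C > 0. If |X| ≤ C almost surely, then Var[X²] ≤ 4·C²·Var[X]. -/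
open MeasureTheory ProbabilityTheory

lemma aux_var_sub_const {Ω : Type} [MeasurableSpace Ω] (μ : Measure Ω) [IsProbabilityMeasure μ]
    (Y : Ω → ℝ) (hY : Integrable Y μ) (c : ℝ) :
    variance (fun ω => Y ω - c) μ = variance Y μ := by
  have hmean : μ[fun ω => Y ω - c] = μ[Y] - c := by
    rw [integral_sub hY (integrable_const c)]
    simp
  unfold ProbabilityTheory.variance ProbabilityTheory.evariance
  congr 1
  apply lintegral_congr
  intro ω
  rw [hmean]
  ring_nf

/-- Lemma `X2`: if `|X| ≤ C` almost surely on a probability space, then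
`Var[X²] ≤ 4 C² Var[X]`. -/
theorem stmt_6 {Ω : Type} [MeasurableSpace Ω] (μ : Measure Ω) [IsProbabilityMeasure μ]
    (X : Ω → ℝ) (hX : Measurable X) (C : ℝ) (hC : 0 < C)
    (hbound : ∀ᵐ ω ∂μ, |X ω| ≤ C) :
    variance (fun ω => (X ω)^2) μ ≤ 4 * C^2 * variance X μ := by
  set m := μ[X] with hm
  -- integrability facts
  have hXint : Integrable X μ :=
    (memLp_one_iff_integrable.mp (MemLp.of_bound hX.aestronglyMeasurable C hbound))
  have hX2mem : MemLp (fun ω => (X ω)^2) 2 μ := by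
    refine MemLp.of_bound ((hX.pow_const 2).aestronglyMeasurable) (C^2) ?_
    filter_upwards [hbound] with ω hω
    have : |X ω ^ 2| = |X ω| ^ 2 := by rw [abs_pow]
    rw [Real.norm_eq_abs, this]
    exact pow_le_pow_left₀ (abs_nonneg _) hω 2
  have hX2int : Integrable (fun ω => (X ω)^2) μ := hX2mem.integrable one_le_two
  have hmabs : |m| ≤ C := by
    calc |m| ≤ μ[fun ω => |X ω|] := norm_integral_le_integral_norm X
    _ ≤ μ[fun _ => C] := integral_mono_ae hXint.abs (integrable_const C) hbound
    _ = C := by simp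
  -- shift
  rw [← aux_var_sub_const μ _ hX2int (m^2)]
  have hmeas2 : AEStronglyMeasurable (fun ω => (X ω)^2 - m^2) μ :=
    ((hX.pow_const 2).sub_const _).aestronglyMeasurable
  calc variance (fun ω => (X ω)^2 - m^2) μ
      ≤ μ[(fun ω => (X ω)^2 - m^2) ^ 2] := variance_le_expectation_sq hmeas2
    _ ≤ μ[fun ω => 4 * C^2 * (X ω - m)^2] := by
        apply integral_mono_ae
        · exact (memLp_two_iff_integrable_sq hmeas2).mp
            (hX2mem.sub (memLp_const _))
        · refine Integrable.const_mul ?_ _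
          exact (memLp_two_iff_integrable_sq
            ((hX.sub_const m).aestronglyMeasurable)).mp
            ((MemLp.of_bound hX.aestronglyMeasurable C hbound).sub (memLp_const _))
        · filter_upwards [hbound] with ω hω
          have key : (X ω ^ 2 - m ^ 2) ^ 2 = (X ω - m)^2 * (X ω + m)^2 := by ring
          simp only [Pi.pow_apply]
          rw [key]
          have h1 : (X ω + m)^2 ≤ (2*C)^2 := by
            rw [← sq_abs]
            apply pow_le_pow_left₀ (abs_nonneg _)
            calc |X ω + m| ≤ |X ω| + |m| := abs_add_le _ _
              _ ≤ C + C := add_le_add hω hmabs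
              _ = 2 * C := by ring
          calc (X ω - m)^2 * (X ω + m)^2 ≤ (X ω - m)^2 * (2*C)^2 :=
                mul_le_mul_of_nonneg_left h1 (sq_nonneg _)
            _ = 4 * C^2 * (X ω - m)^2 := by ring
    _ = 4 * C^2 * μ[fun ω => (X ω - m)^2] := integral_const_mul _ _
    _ = 4 * C^2 * variance X μ := by
        congr 1
        rw [variance_eq_integral hX.aemeasurable]
end

section
/- There exists a universal constant C > 0 with the following property. Let 𝒳 be a finite set with |𝒳| = S ≥ 1, let P be a probability distribution on 𝒳, let B > 0, let V : 𝒳 → [−B, B], let N ≥ 1 be an integer, and let δ ∈ (0,1). If P̂ is the empirical distribution of N i.i.d. samples drawn from P, then with probability at least 1 − δ: |P̂V − PV| ≤ C·( √( S·𝕍(P,V)·ln(2S/δ) / N ) + S·B·ln(2S/δ)/N ). -/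
open MeasureTheory ProbabilityTheory Real

lemma aux_exp_le {u : ℝ} (hu : |u| ≤ 1) : Real.exp u ≤ 1 + u + u ^ 2 := by
  have h := Real.exp_bound hu (n := 2) (by norm_num)
  have h2 : ∑ i ∈ Finset.range 2, u ^ i / i.factorial = 1 + u := by
    simp [Finset.sum_range_succ]
  rw [h2] at h
  have h3 : |u| ^ 2 * ((Nat.succ 2 : ℕ) / ((Nat.factorial 2 : ℕ) * (2:ℕ) : ℝ)) = u ^ 2 * (3/4) := by
    rw [sq_abs]; norm_num [Nat.factorial]
  rw [h3] at h
  have := (abs_le.mp h).2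
  nlinarith [sq_nonneg u]

lemma aux_mgf_ind {Ω : Type*} [MeasurableSpace Ω] (μ : Measure Ω) [IsProbabilityMeasure μ]
    (A : Set Ω) (hA : MeasurableSet A) (p : ℝ) (hp0 : 0 ≤ p) (hp1 : p ≤ 1)
    (hp : (μ A).toReal = p) (c t : ℝ) (hct : |t * c| ≤ 1) :
    mgf (fun ω => c * (A.indicator (fun _ => (1:ℝ)) ω - p)) μ t ≤ Real.exp (p * (t * c) ^ 2) := by
  set u := t * c with hu
  have key : (fun ω => Real.exp (t * (c * (A.indicator (fun _ => (1:ℝ)) ω - p)))) =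
      fun ω => A.indicator (fun _ => Real.exp (u * (1 - p)) - Real.exp (-(u * p))) ω
        + Real.exp (-(u * p)) := by
    funext ω
    by_cases hω : ω ∈ A
    · simp only [Set.indicator_of_mem hω, hu]
      ring_nf
    · simp only [Set.indicator_of_notMem hω, hu]
      ring_nf
  have hint : Integrable (fun ω => A.indicator
      (fun _ => Real.exp (u * (1 - p)) - Real.exp (-(u * p))) ω) μ :=
    (integrable_const _).indicator hA
  have hval : mgf (fun ω => c * (A.indicator (fun _ => (1:ℝ)) ω - p)) μ t
      = p * Real.exp (u * (1 - p)) + (1 - p) * Real.exp (-(u * p)) := by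
    rw [mgf]
    rw [show (fun ω => Real.exp (t * (c * (A.indicator (fun _ => (1:ℝ)) ω - p)))) = _ from key]
    rw [integral_add hint (integrable_const _)]
    rw [integral_indicator_const _ hA, integral_const]
    simp only [Measure.real, hp, measure_univ, ENNReal.toReal_one, one_smul, smul_eq_mul]
    ring
  rw [hval]
  have e1 : p * Real.exp (u * (1 - p)) + (1 - p) * Real.exp (-(u * p))
      = Real.exp (-(u * p)) * (1 + p * (Real.exp u - 1)) := by
    rw [show u * (1 - p) = u + -(u * p) by ring, Real.exp_add]
    ring
  rw [e1]
  have e2 : 1 + p * (Real.exp u - 1) ≤ Real.exp (p * (Real.exp u - 1)) := by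
    linarith [Real.add_one_le_exp (p * (Real.exp u - 1))]
  have e3 : Real.exp (-(u * p)) * (1 + p * (Real.exp u - 1))
      ≤ Real.exp (-(u * p)) * Real.exp (p * (Real.exp u - 1)) := by
    apply mul_le_mul_of_nonneg_left e2 (Real.exp_nonneg _)
  refine e3.trans ?_
  rw [← Real.exp_add]
  apply Real.exp_le_exp.mpr
  have := aux_exp_le hct
  nlinarith [hp0, sq_nonneg u]

lemma aux_tail {Ω : Type*} [MeasurableSpace Ω] (μ : Measure Ω) [IsProbabilityMeasure μ]
    {N : ℕ} (W : Fin N → Ω → ℝ) (hmeas : ∀ i, Measurable (W i))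
    (hbdd : ∀ i ω, |W i ω| ≤ 1)
    (hindep : iIndepFun W μ)
    (p : ℝ) (hp0 : 0 ≤ p)
    (hmgf : ∀ (i : Fin N) (t : ℝ), 0 ≤ t → t ≤ 1 → mgf (W i) μ t ≤ Real.exp (p * t ^ 2))
    (L : ℝ) (hL : 0 < L) :
    (μ {ω | Real.sqrt (4 * N * p * L) + 2 * L ≤ ∑ i, W i ω}).toReal ≤ Real.exp (-L) := by
  set a : ℝ := Real.sqrt (4 * N * p * L) + 2 * L with ha
  set t : ℝ := if (N : ℝ) * p ≤ L then 1 else Real.sqrt (L / (N * p)) with htdef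
  have ht0 : 0 < t := by
    rw [htdef]
    split_ifs with h
    · norm_num
    · push_neg at h
      have hNp : 0 < (N : ℝ) * p := lt_of_le_of_lt hL.le h |>.trans_le le_rfl |> fun _ => by
        nlinarith
      exact Real.sqrt_pos.mpr (div_pos hL hNp)
  have ht1 : t ≤ 1 := by
    rw [htdef]
    split_ifs with h
    · exact le_rfl
    · push_neg at h
      have hNp : 0 < (N : ℝ) * p := by nlinarith
      rw [show (1:ℝ) = Real.sqrt 1 by simp]
      exact Real.sqrt_le_sqrt ((div_le_one hNp).mpr h.le)
  -- measurability / integrability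
  have hsummeas : Measurable (fun ω => ∑ i, W i ω) :=
    Finset.measurable_sum _ (fun i _ => hmeas i)
  have hintsum : Integrable (fun ω => Real.exp (t * ∑ i, W i ω)) μ := by
    refine Integrable.mono' (integrable_const (Real.exp (t * N)))
      ((hsummeas.const_mul t).exp.aestronglyMeasurable) ?_
    filter_upwards with ω
    rw [Real.norm_eq_abs, Real.abs_exp]
    apply Real.exp_le_exp.mpr
    apply mul_le_mul_of_nonneg_left _ ht0.le
    calc ∑ i, W i ω ≤ ∑ i : Fin N, (1:ℝ) := Finset.sum_le_sum fun i _ => (abs_le.mp (hbdd i ω)).2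
    _ = N := by simp
  -- Chernoff
  have hch := measure_ge_le_exp_mul_mgf (μ := μ) (X := fun ω => ∑ i, W i ω) a ht0.le hintsum
  have hmgfsum : mgf (fun ω => ∑ i, W i ω) μ t ≤ Real.exp (N * (p * t ^ 2)) := by
    have heq : (fun ω => ∑ i, W i ω) = ∑ i, W i := by funext ω; simp
    rw [heq, hindep.mgf_sum hmeas]
    calc ∏ i : Fin N, mgf (W i) μ t ≤ ∏ _i : Fin N, Real.exp (p * t ^ 2) :=
          Finset.prod_le_prod (fun i _ => mgf_nonneg) (fun i _ => hmgf i t ht0.le ht1)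
    _ = Real.exp (N * (p * t ^ 2)) := by
        rw [Finset.prod_const, ← Real.exp_nat_mul]; simp
  refine hch.trans ?_
  have : Real.exp (-t * a) * mgf (fun ω => ∑ i, W i ω) μ t
      ≤ Real.exp (-t * a) * Real.exp (N * (p * t ^ 2)) :=
    mul_le_mul_of_nonneg_left hmgfsum (Real.exp_nonneg _)
  refine this.trans ?_
  rw [← Real.exp_add]
  apply Real.exp_le_exp.mpr
  rw [ha, htdef]
  split_ifs with h
  · have hs := Real.sqrt_nonneg (4 * N * p * L)
    nlinarith
  · push_neg at h
    have hNp : 0 < (N : ℝ) * p := by nlinarith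
    have ht2 : Real.sqrt (L / (N * p)) ^ 2 = L / (N * p) := Real.sq_sqrt (by positivity)
    have hNpt : (N : ℝ) * (p * Real.sqrt (L / (N * p)) ^ 2) = L := by
      rw [ht2, ← mul_assoc, mul_div_assoc', div_eq_iff hNp.ne']; ring
    have hta : Real.sqrt (L / (N * p)) * Real.sqrt (4 * N * p * L) = 2 * L := by
      rw [← Real.sqrt_mul (by positivity)]
      rw [show L / ((N:ℝ) * p) * (4 * N * p * L) = (2 * L) ^ 2 by rw [div_mul_eq_mul_div, div_eq_iff hNp.ne']; ring]
      exact Real.sqrt_sq (by positivity)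
    have hpos : (0:ℝ) ≤ 2 * L * Real.sqrt (L / (N * p)) := by positivity
    nlinarith [hta, hNpt, hpos]

/-- Single-distribution core of Lemma `dPV`: with probability at least `1 − δ`, the
empirical mean of `V` under `N` i.i.d. samples from `P` deviates from the true mean by at
most `C·(√(S·𝕍(P,V)·ln(2S/δ)/N) + S·B·ln(2S/δ)/N)` for a universal constant `C`. -/
theorem stmt_7 :
    ∃ C : ℝ, 0 < C ∧
      ∀ (X : Type) [Fintype X] [DecidableEq X] [MeasurableSpace X]
        [MeasurableSingletonClass X]
        (Ω : Type) [MeasurableSpace Ω] (μ : Measure Ω) [IsProbabilityMeasure μ]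
        (P : X → ℝ) (_ : ∀ x, 0 ≤ P x) (_ : ∑ x, P x = 1)
        (B : ℝ) (_ : 0 < B) (V : X → ℝ) (_ : ∀ x, |V x| ≤ B)
        (N : ℕ) (_ : 1 ≤ N) (δ : ℝ) (_ : 0 < δ) (_ : δ < 1)
        (Y : Fin N → Ω → X) (_ : ∀ i, Measurable (Y i))
        (_ : iIndepFun Y μ)
        (_ : ∀ i x, (μ {ω | Y i ω = x}).toReal = P x),
        1 - δ ≤
          (μ {ω |
            |(∑ x, (((Finset.univ.filter fun i : Fin N => Y i ω = x).card : ℝ) / N) * V x) -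
              ∑ x, P x * V x| ≤
            C * (Real.sqrt ((Fintype.card X) *
                  ((∑ x, P x * (V x)^2) - (∑ x, P x * V x)^2) *
                  Real.log (2 * (Fintype.card X) / δ) / N) +
                (Fintype.card X) * B * Real.log (2 * (Fintype.card X) / δ) / N)}).toReal := by
  classical
  refine ⟨4, by norm_num, ?_⟩
  intro X _ _ _ _ Ω _ μ _ P hP0 hPsum B hB V hV N hN δ hδ0 hδ1 Y hYmeas hYindep hYdist
  have hXne : Nonempty X := by
    by_contra h
    rw [not_nonempty_iff] at h
    rw [Finset.univ_eq_empty, Finset.sum_empty] at hPsum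
    norm_num at hPsum
  set S : ℝ := (Fintype.card X : ℝ) with hSdef
  have hS1 : (1:ℝ) ≤ S := by
    have := Fintype.card_pos (α := X)
    rw [hSdef]; exact_mod_cast this
  have hNpos : (0:ℝ) < N := by exact_mod_cast hN
  set L : ℝ := Real.log (2 * S / δ) with hLdef
  have hArg : 1 < 2 * S / δ := by
    rw [lt_div_iff₀ hδ0]; nlinarith
  have hL : 0 < L := Real.log_pos hArg
  have hP1 : ∀ x, P x ≤ 1 := fun x => by
    rw [← hPsum]
    exact Finset.single_le_sum (fun i _ => hP0 i) (Finset.mem_univ x)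
  have hA : ∀ (i : Fin N) (x : X), MeasurableSet {ω | Y i ω = x} :=
    fun i x => hYmeas i (measurableSet_singleton x)
  -- counting function
  set cnt : X → Ω → ℝ := fun x ω => ((Finset.univ.filter fun i : Fin N => Y i ω = x).card : ℝ)
    with hcnt
  have hcnt_sum : ∀ x ω, cnt x ω = ∑ i, (if Y i ω = x then (1:ℝ) else 0) := by
    intro x ω
    show ((Finset.univ.filter fun i : Fin N => Y i ω = x).card : ℝ) = _
    rw [Finset.card_filter]
    push_cast
    rfl
  set a : X → ℝ := fun x => Real.sqrt (4 * N * P x * L) + 2 * L with ha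
  -- tail bound for each coordinate and sign
  have key : ∀ (x : X) (c : ℝ), (c = 1 ∨ c = -1) →
      (μ {ω | a x ≤ ∑ i, c * ((if Y i ω = x then (1:ℝ) else 0) - P x)}).toReal
        ≤ Real.exp (-L) := by
    intro x c hc
    set W : Fin N → Ω → ℝ := fun i ω => c * ((if Y i ω = x then (1:ℝ) else 0) - P x) with hW
    have hWmeas : ∀ i, Measurable (W i) := fun i =>
      (((Measurable.ite (hA i x) measurable_const measurable_const)).sub measurable_const).const_mul c
    have habs : |c| = 1 := by rcases hc with h | h <;> simp [h]
    have hWbdd : ∀ i ω, |W i ω| ≤ 1 := by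
      intro i ω
      rw [hW]
      simp only
      rw [abs_mul, habs, one_mul]
      by_cases h : Y i ω = x <;> simp only [h, if_true, if_false] <;> rw [abs_le] <;>
        constructor <;> simp <;> linarith [hP0 x, hP1 x]
    have hWindep : iIndepFun W μ := by
      have := hYindep.comp (fun _ (y : X) => c * ((if y = x then (1:ℝ) else 0) - P x))
        (fun _ => measurable_of_finite _)
      exact this
    have hWmgf : ∀ (i : Fin N) (t : ℝ), 0 ≤ t → t ≤ 1 →
        mgf (W i) μ t ≤ Real.exp (P x * t ^ 2) := by
      intro i t ht0 ht1
      have heq : W i = fun ω => c * (({ω' | Y i ω' = x}).indicator (fun _ => (1:ℝ)) ω - P x) := by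
        funext ω; rw [hW]; simp [Set.indicator_apply]
      rw [heq]
      have hct : |t * c| ≤ 1 := by
        rw [abs_mul, habs, mul_one, abs_of_nonneg ht0]; exact ht1
      have h1 := aux_mgf_ind μ _ (hA i x) (P x) (hP0 x) (hP1 x) (hYdist i x) c t hct
      refine h1.trans ?_
      apply Real.exp_le_exp.mpr
      have h2 : (t * c) ^ 2 = t ^ 2 := by rcases hc with h | h <;> rw [h] <;> ring
      rw [h2]
    exact aux_tail μ W hWmeas hWbdd hWindep (P x) (hP0 x) hWmgf L hL
  -- good event
  set good : Set Ω := ⋂ x : X, {ω | |cnt x ω - N * P x| ≤ a x} with hgood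
  have hcntmeas : ∀ x, Measurable (cnt x) := by
    intro x
    have : cnt x = fun ω => ∑ i, (if Y i ω = x then (1:ℝ) else 0) := funext (hcnt_sum x)
    rw [this]
    exact Finset.measurable_sum _ fun i _ =>
      Measurable.ite (hA i x) measurable_const measurable_const
  have hgoodmeas : MeasurableSet good := by
    apply MeasurableSet.iInter
    intro x
    exact measurableSet_le (((hcntmeas x).sub measurable_const).abs) measurable_const
  -- sums identities
  have hsum1 : ∀ x ω, ∑ i, (1:ℝ) * ((if Y i ω = x then (1:ℝ) else 0) - P x)
      = cnt x ω - N * P x := by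
    intro x ω
    simp only [one_mul]
    rw [Finset.sum_sub_distrib, ← hcnt_sum x ω, Finset.sum_const, Finset.card_univ,
      Fintype.card_fin, nsmul_eq_mul]
  have hsum2 : ∀ x ω, ∑ i, (-1:ℝ) * ((if Y i ω = x then (1:ℝ) else 0) - P x)
      = -(cnt x ω - N * P x) := by
    intro x ω
    rw [← hsum1 x ω, ← Finset.sum_neg_distrib]
    congr 1; funext i; ring
  -- union bound
  have hcompl : goodᶜ ⊆ ⋃ x : X,
      ({ω | a x ≤ ∑ i, (1:ℝ) * ((if Y i ω = x then (1:ℝ) else 0) - P x)}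
        ∪ {ω | a x ≤ ∑ i, (-1:ℝ) * ((if Y i ω = x then (1:ℝ) else 0) - P x)}) := by
    intro ω hω
    rw [hgood, Set.compl_iInter, Set.mem_iUnion] at hω
    obtain ⟨x, hx⟩ := hω
    rw [Set.mem_compl_iff, Set.mem_setOf_eq, not_le] at hx
    refine Set.mem_iUnion.mpr ⟨x, ?_⟩
    rcases (lt_abs.mp hx) with h | h
    · left; rw [Set.mem_setOf_eq, hsum1 x ω]; exact h.le
    · right; rw [Set.mem_setOf_eq, hsum2 x ω]; exact h.le
  have hexp : Real.exp (-L) = δ / (2 * S) := by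
    rw [hLdef, Real.exp_neg, Real.exp_log (by linarith), inv_div]
  have hμcompl : (μ goodᶜ).toReal ≤ δ := by
    have h1 : μ goodᶜ ≤ ∑ x : X,
        (μ {ω | a x ≤ ∑ i, (1:ℝ) * ((if Y i ω = x then (1:ℝ) else 0) - P x)}
          + μ {ω | a x ≤ ∑ i, (-1:ℝ) * ((if Y i ω = x then (1:ℝ) else 0) - P x)}) := by
      refine (measure_mono hcompl).trans ((measure_iUnion_le _).trans ?_)
      rw [tsum_fintype]
      exact Finset.sum_le_sum fun x _ => measure_union_le _ _
    have h2 : (μ goodᶜ).toReal ≤ (∑ x : X,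
        (μ {ω | a x ≤ ∑ i, (1:ℝ) * ((if Y i ω = x then (1:ℝ) else 0) - P x)}
          + μ {ω | a x ≤ ∑ i, (-1:ℝ) * ((if Y i ω = x then (1:ℝ) else 0) - P x)})).toReal :=
      ENNReal.toReal_mono (ENNReal.sum_lt_top.mpr fun x _ =>
        ENNReal.add_lt_top.mpr ⟨measure_lt_top μ _, measure_lt_top μ _⟩).ne h1
    refine h2.trans ?_
    rw [ENNReal.toReal_sum (fun x _ =>
      (ENNReal.add_lt_top.mpr ⟨measure_lt_top μ _, measure_lt_top μ _⟩).ne)]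
    calc ∑ x : X, (μ {ω | a x ≤ ∑ i, (1:ℝ) * ((if Y i ω = x then (1:ℝ) else 0) - P x)}
            + μ {ω | a x ≤ ∑ i, (-1:ℝ) * ((if Y i ω = x then (1:ℝ) else 0) - P x)}).toReal
        ≤ ∑ _x : X, (Real.exp (-L) + Real.exp (-L)) := by
          refine Finset.sum_le_sum fun x _ => ?_
          rw [ENNReal.toReal_add (measure_lt_top μ _).ne (measure_lt_top μ _).ne]
          exact add_le_add (key x 1 (Or.inl rfl)) (key x (-1) (Or.inr rfl))
      _ = S * (2 * Real.exp (-L)) := by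
          rw [Finset.sum_const, Finset.card_univ, nsmul_eq_mul, hSdef]; ring
      _ = δ := by
          have hS0 : S ≠ 0 := by linarith
          rw [hexp]; field_simp
  have hgoodμ : 1 - δ ≤ (μ good).toReal := by
    have hadd := measure_add_measure_compl (μ := μ) hgoodmeas
    rw [measure_univ] at hadd
    have : (μ good).toReal + (μ goodᶜ).toReal = 1 := by
      rw [← ENNReal.toReal_add (measure_lt_top μ _).ne (measure_lt_top μ _).ne, hadd]
      simp
    linarith
  -- deterministic part
  refine hgoodμ.trans (ENNReal.toReal_mono (measure_lt_top μ _).ne (measure_mono ?_))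
  intro ω hω
  rw [hgood, Set.mem_iInter] at hω
  simp only [Set.mem_setOf_eq] at hω ⊢
  have hcc : ∀ x, ((Finset.univ.filter fun i : Fin N => Y i ω = x).card : ℝ) = cnt x ω :=
    fun x => rfl
  simp only [hcc]
  set m : ℝ := ∑ x, P x * V x with hm
  set Var : ℝ := ∑ x, P x * (V x - m) ^ 2 with hVar
  have hVarEq : Var = (∑ x, P x * V x ^ 2) - m ^ 2 := by
    rw [hVar]
    have e : ∀ x ∈ Finset.univ, P x * (V x - m) ^ 2
        = P x * V x ^ 2 - 2 * m * (P x * V x) + m ^ 2 * P x := fun x _ => by ring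
    rw [Finset.sum_congr rfl e, Finset.sum_add_distrib, Finset.sum_sub_distrib,
        ← Finset.mul_sum, ← Finset.mul_sum, hPsum, ← hm]
    ring
  have hVar0 : 0 ≤ Var := Finset.sum_nonneg fun x _ => mul_nonneg (hP0 x) (sq_nonneg _)
  rw [← hVarEq]
  have hmB : |m| ≤ B := by
    rw [hm]
    calc |∑ x, P x * V x| ≤ ∑ x, |P x * V x| := Finset.abs_sum_le_sum_abs _ _
      _ ≤ ∑ x, P x * B := Finset.sum_le_sum fun x _ => by
          rw [abs_mul, abs_of_nonneg (hP0 x)]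
          exact mul_le_mul_of_nonneg_left (hV x) (hP0 x)
      _ = B := by rw [← Finset.sum_mul, hPsum, one_mul]
  have hWB : ∀ x, |V x - m| ≤ 2 * B := fun x => by
    rw [sub_eq_add_neg]
    refine (abs_add_le _ _).trans ?_
    rw [abs_neg]
    linarith [hV x, hmB]
  have hcntN : ∑ x, cnt x ω = (N : ℝ) := by
    calc ∑ x, cnt x ω = ∑ x, ∑ i, (if Y i ω = x then (1:ℝ) else 0) :=
          Finset.sum_congr rfl fun x _ => hcnt_sum x ω
      _ = ∑ i : Fin N, ∑ x, (if Y i ω = x then (1:ℝ) else 0) := Finset.sum_comm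
      _ = ∑ _i : Fin N, (1:ℝ) := Finset.sum_congr rfl fun i _ => by
          rw [Finset.sum_ite_eq]
          simp
      _ = N := by simp
  have hdev : (∑ x, cnt x ω / N * V x) - m = ∑ x, (cnt x ω / N - P x) * (V x - m) := by
    have e : ∀ x ∈ Finset.univ, (cnt x ω / N - P x) * (V x - m)
        = cnt x ω / N * V x - P x * V x - (m * (cnt x ω / N) - m * P x) := fun x _ => by ring
    rw [Finset.sum_congr rfl e, Finset.sum_sub_distrib, Finset.sum_sub_distrib,
        Finset.sum_sub_distrib, ← Finset.mul_sum, ← Finset.mul_sum, ← Finset.sum_div, hcntN,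
        hPsum, ← hm]
    field_simp
    ring
  have hterm : ∀ x, |cnt x ω / N - P x| ≤ a x / N := fun x => by
    rw [show cnt x ω / N - P x = (cnt x ω - N * P x) / N by field_simp, abs_div,
        abs_of_pos hNpos]
    gcongr
    exact hω x
  have ha0 : ∀ x, 0 ≤ a x := fun x => by
    rw [ha]
    have := Real.sqrt_nonneg (4 * N * P x * L)
    simp only
    linarith
  -- Cauchy–Schwarz
  set T : ℝ := ∑ x, Real.sqrt (P x) * |V x - m| with hT
  have hT0 : 0 ≤ T :=
    Finset.sum_nonneg fun x _ => mul_nonneg (Real.sqrt_nonneg _) (abs_nonneg _)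
  have hCS : T ^ 2 ≤ S * Var := by
    have h1 := Finset.sum_mul_sq_le_sq_mul_sq Finset.univ (fun _ : X => (1:ℝ))
      (fun x => Real.sqrt (P x) * |V x - m|)
    simp only [one_mul, one_pow] at h1
    rw [hT, hVar]
    refine h1.trans ?_
    have h3 : (∑ _x : X, (1:ℝ)) = S := by
      rw [Finset.sum_const, Finset.card_univ, nsmul_eq_mul, mul_one, hSdef]
    have h2 : ∀ x ∈ Finset.univ, (Real.sqrt (P x) * |V x - m|) ^ 2 = P x * (V x - m) ^ 2 :=
      fun x _ => by rw [mul_pow, Real.sq_sqrt (hP0 x), sq_abs]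
    rw [Finset.sum_congr rfl h2, h3]
  have hTsqrt : T ≤ Real.sqrt (S * Var) := by
    calc T = Real.sqrt (T ^ 2) := (Real.sqrt_sq hT0).symm
      _ ≤ Real.sqrt (S * Var) := Real.sqrt_le_sqrt hCS
  have hT1 : ∑ x, Real.sqrt (4 * N * P x * L) * |V x - m|
      ≤ Real.sqrt (4 * N * L) * Real.sqrt (S * Var) := by
    have e : ∀ x ∈ Finset.univ, Real.sqrt (4 * N * P x * L) * |V x - m|
        = Real.sqrt (4 * N * L) * (Real.sqrt (P x) * |V x - m|) := by
      intro x _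
      rw [show 4 * (N:ℝ) * P x * L = (4 * N * L) * P x by ring,
        Real.sqrt_mul (by positivity), mul_assoc]
    rw [Finset.sum_congr rfl e, ← Finset.mul_sum, ← hT]
    exact mul_le_mul_of_nonneg_left hTsqrt (Real.sqrt_nonneg _)
  have hT2 : Real.sqrt (4 * N * L) * Real.sqrt (S * Var)
      = N * (2 * Real.sqrt (S * Var * L / N)) := by
    rw [← Real.sqrt_mul (by positivity)]
    rw [show (4 * (N:ℝ) * L) * (S * Var) = ((N:ℝ) * 2) ^ 2 * (S * Var * L / N) by
      field_simp; ring]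
    rw [Real.sqrt_mul (by positivity), Real.sqrt_sq (by positivity)]
    ring
  have hT3 : ∑ x, |V x - m| ≤ S * (2 * B) := by
    calc ∑ x, |V x - m| ≤ ∑ _x : X, 2 * B := Finset.sum_le_sum fun x _ => hWB x
      _ = S * (2 * B) := by
        rw [Finset.sum_const, Finset.card_univ, nsmul_eq_mul, hSdef]
  have hSBLN : 0 ≤ S * B * L / N :=
    div_nonneg (mul_nonneg (mul_nonneg (by linarith) hB.le) hL.le) hNpos.le
  rw [hdev]
  calc |∑ x, (cnt x ω / N - P x) * (V x - m)|
      ≤ ∑ x, |(cnt x ω / N - P x) * (V x - m)| := Finset.abs_sum_le_sum_abs _ _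
    _ ≤ ∑ x, (a x / N) * |V x - m| := Finset.sum_le_sum fun x _ => by
        rw [abs_mul]
        exact mul_le_mul_of_nonneg_right (hterm x) (abs_nonneg _)
    _ = (∑ x, Real.sqrt (4 * N * P x * L) * |V x - m|) / N
        + (2 * L / N) * ∑ x, |V x - m| := by
        rw [Finset.sum_div, Finset.mul_sum, ← Finset.sum_add_distrib]
        refine Finset.sum_congr rfl fun x _ => ?_
        rw [ha]
        simp only
        ring
    _ ≤ (Real.sqrt (4 * N * L) * Real.sqrt (S * Var)) / N + (2 * L / N) * (S * (2 * B)) := by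
        gcongr
    _ = 2 * Real.sqrt (S * Var * L / N) + 4 * (S * B * L / N) := by
        rw [hT2]
        field_simp
        ring
    _ ≤ 4 * (Real.sqrt (S * Var * L / N) + S * B * L / N) := by
        have := Real.sqrt_nonneg (S * Var * L / N)
        linarith
end

section
/- There exists a universal constant C > 0 with the following property. Let 𝒳 be a finite set with |𝒳| = S ≥ 1, let P be a probability distribution on 𝒳, let B > 0, let V : 𝒳 → [−B, B], let N ≥ 1 be an integer, and let δ ∈ (0,1). If P̂ is the empirical distribution of N i.i.d. samples drawn from P, then with probability at least 1 − δ: 𝕍(P̂, V) ≤ C·( 𝕍(P, V) + S·B²·ln(2S/δ)/N ). -/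
open MeasureTheory ProbabilityTheory

lemma expand_var {X : Type} [Fintype X] (w V : X → ℝ) (hw1 : ∑ x, w x = 1) (m : ℝ) :
    ∑ x, w x * (V x - m)^2 =
      ((∑ x, w x * (V x)^2) - (∑ x, w x * V x)^2) + ((∑ x, w x * V x) - m)^2 := by
  have : ∑ x, w x * (V x - m)^2
      = (∑ x, w x * (V x)^2) - (2*m) * (∑ x, w x * V x) + m^2 * ∑ x, w x := by
    rw [Finset.mul_sum, Finset.mul_sum, ← Finset.sum_sub_distrib, ← Finset.sum_add_distrib]
    exact Finset.sum_congr rfl fun x _ => by ring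
  rw [this, hw1]; ring

lemma chernoff_count {Ω : Type} [MeasurableSpace Ω] (μ : Measure Ω) [IsProbabilityMeasure μ]
    {X : Type} [MeasurableSpace X] [MeasurableSingletonClass X] [DecidableEq X]
    {N : ℕ} (Y : Fin N → Ω → X) (hY : ∀ i, Measurable (Y i))
    (hind : iIndepFun Y μ) (x : X) (p : ℝ) (hp0 : 0 ≤ p)
    (hp : ∀ i, (μ {ω | Y i ω = x}).toReal = p) (a : ℝ) :
    (μ {ω | a ≤ ((Finset.univ.filter fun i : Fin N => Y i ω = x).card : ℝ)}).toReal ≤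
      Real.exp (-(Real.log 2) * a + N * p) := by
  classical
  set Z : Fin N → Ω → ℝ := fun i ω => if Y i ω = x then 1 else 0 with hZdef
  have hA : ∀ i, MeasurableSet {ω | Y i ω = x} := fun i => (hY i) (measurableSet_singleton x)
  have hZmeas : ∀ i, Measurable (Z i) := fun i =>
    Measurable.ite (hA i) measurable_const measurable_const
  have hindZ : iIndepFun Z μ := by
    have := hind.comp (fun _ z => if z = x then (1:ℝ) else 0)
      (fun _ => Measurable.ite (measurableSet_singleton x) measurable_const measurable_const)
    exact this
  have hexp : ∀ i, (fun ω => Real.exp (Real.log 2 * Z i ω))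
      = fun ω => 1 + Set.indicator {ω | Y i ω = x} (fun _ => (1:ℝ)) ω := by
    intro i; funext ω
    by_cases h : Y i ω = x
    · simp [hZdef, h, Set.indicator, Real.exp_log two_pos]; norm_num
    · simp [hZdef, h, Set.indicator]
  have hint : ∀ i, Integrable (fun ω => Real.exp (Real.log 2 * Z i ω)) μ := by
    intro i; rw [hexp i]
    exact (integrable_const 1).add ((integrable_const 1).indicator (hA i))
  have hmgf : ∀ i, mgf (Z i) μ (Real.log 2) = 1 + p := by
    intro i
    rw [mgf, hexp i, integral_add (integrable_const 1) ((integrable_const 1).indicator (hA i)),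
      integral_const, integral_indicator_const (1:ℝ) (hA i)]
    simp [hp i]
    exact hp i
  have hsum : ∀ ω, ((Finset.univ.filter fun i : Fin N => Y i ω = x).card : ℝ)
      = (∑ i, Z i) ω := by
    intro ω
    simp only [Finset.sum_apply, hZdef, Finset.card_filter]
    push_cast
    rfl
  have hmgfsum : mgf (∑ i, Z i) μ (Real.log 2) = (1 + p)^N := by
    rw [hindZ.mgf_sum hZmeas Finset.univ]
    simp [hmgf]
  have hintsum : Integrable (fun ω => Real.exp (Real.log 2 * (∑ i, Z i) ω)) μ := by
    refine Integrable.mono' (integrable_const (Real.exp (Real.log 2 * N))) ?_ ?_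
    · have hm : Measurable fun ω => (∑ i, Z i) ω := by
        simp only [Finset.sum_apply]
        exact Finset.measurable_sum Finset.univ fun i _ => hZmeas i
      exact ((hm.const_mul _).exp).aestronglyMeasurable
    · refine Filter.Eventually.of_forall fun ω => ?_
      rw [Real.norm_eq_abs, abs_of_pos (Real.exp_pos _)]
      apply Real.exp_le_exp.2
      apply mul_le_mul_of_nonneg_left _ (Real.log_nonneg one_le_two)
      calc (∑ i, Z i) ω = ∑ i, Z i ω := by simp [Finset.sum_apply]
        _ ≤ ∑ _i : Fin N, (1:ℝ) := by
            refine Finset.sum_le_sum fun i _ => ?_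
            simp only [hZdef]; split <;> norm_num
        _ = N := by simp
  calc (μ {ω | a ≤ ((Finset.univ.filter fun i : Fin N => Y i ω = x).card : ℝ)}).toReal
      = (μ {ω | a ≤ (∑ i, Z i) ω}).toReal := by
        have hseq : {ω | a ≤ ((Finset.univ.filter fun i : Fin N => Y i ω = x).card : ℝ)}
            = {ω | a ≤ (∑ i, Z i) ω} := by
          ext ω; simp only [Set.mem_setOf_eq, hsum]
        rw [hseq]
    _ ≤ Real.exp (-(Real.log 2) * a) * mgf (∑ i, Z i) μ (Real.log 2) :=
        measure_ge_le_exp_mul_mgf a (Real.log_nonneg one_le_two) hintsum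
    _ = Real.exp (-(Real.log 2) * a) * (1 + p)^N := by rw [hmgfsum]
    _ ≤ Real.exp (-(Real.log 2) * a) * (Real.exp p)^N := by
        exact mul_le_mul_of_nonneg_left
          (pow_le_pow_left₀ (by positivity) (by linarith [Real.add_one_le_exp p]) N)
          (Real.exp_pos _).le
    _ = Real.exp (-(Real.log 2) * a + N * p) := by
        rw [← Real.exp_nat_mul, ← Real.exp_add]

lemma detvar {X : Type} [Fintype X] (P q V : X → ℝ) (B t : ℝ)
    (hP0 : ∀ x, 0 ≤ P x) (hP1 : ∑ x, P x = 1) (hq1 : ∑ x, q x = 1)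
    (hqP : ∀ x, q x ≤ 2 * P x + t) (hB : ∀ x, |V x| ≤ B) (hB0 : 0 ≤ B) (ht : 0 ≤ t) :
    (∑ x, q x * (V x)^2) - (∑ x, q x * V x)^2 ≤
      2 * ((∑ x, P x * (V x)^2) - (∑ x, P x * V x)^2)
        + t * (Fintype.card X) * (4 * B^2) := by
  set m := ∑ x, P x * V x with hm
  have hmB : |m| ≤ B := by
    calc |m| ≤ ∑ x, |P x * V x| := Finset.abs_sum_le_sum_abs _ _
      _ ≤ ∑ x, P x * B := by
          refine Finset.sum_le_sum fun x _ => ?_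
          rw [abs_mul, abs_of_nonneg (hP0 x)]
          exact mul_le_mul_of_nonneg_left (hB x) (hP0 x)
      _ = B := by rw [← Finset.sum_mul, hP1, one_mul]
  have hd : ∀ x, (V x - m)^2 ≤ 4 * B^2 := by
    intro x
    have h1 : |V x - m| ≤ 2 * B := (abs_sub _ _).trans (by linarith [hB x])
    calc (V x - m)^2 = |V x - m|^2 := (sq_abs _).symm
      _ ≤ (2*B)^2 := by nlinarith [abs_nonneg (V x - m)]
      _ = 4 * B^2 := by ring
  have hq : (∑ x, q x * (V x)^2) - (∑ x, q x * V x)^2 ≤ ∑ x, q x * (V x - m)^2 := by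
    rw [expand_var q V hq1 m]; nlinarith [sq_nonneg ((∑ x, q x * V x) - m)]
  have hP : ∑ x, P x * (V x - m)^2
      = (∑ x, P x * (V x)^2) - (∑ x, P x * V x)^2 := by
    rw [expand_var P V hP1 m, ← hm, sub_self]; ring
  calc (∑ x, q x * (V x)^2) - (∑ x, q x * V x)^2 ≤ ∑ x, q x * (V x - m)^2 := hq
    _ ≤ ∑ x, (2 * P x + t) * (V x - m)^2 := by
        refine Finset.sum_le_sum fun x _ => ?_
        exact mul_le_mul_of_nonneg_right (hqP x) (sq_nonneg _)
    _ = 2 * (∑ x, P x * (V x - m)^2) + t * ∑ x, (V x - m)^2 := by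
        rw [Finset.mul_sum, Finset.mul_sum, ← Finset.sum_add_distrib]
        exact Finset.sum_congr rfl fun x _ => by ring
    _ ≤ 2 * ((∑ x, P x * (V x)^2) - (∑ x, P x * V x)^2) + t * (Fintype.card X) * (4 * B^2) := by
        rw [hP]
        have hsum : ∑ x, (V x - m)^2 ≤ (Fintype.card X) * (4 * B^2) := by
          calc ∑ x, (V x - m)^2 ≤ ∑ _x : X, 4 * B^2 := Finset.sum_le_sum fun x _ => hd x
            _ = (Fintype.card X) * (4 * B^2) := by
                rw [Finset.sum_const, Finset.card_univ, nsmul_eq_mul]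
        have := mul_le_mul_of_nonneg_left hsum ht
        linarith

/-- Single-distribution core of Lemma `barPV to PV`: with probability at least `1 − δ`,
the variance of `V` under the empirical distribution of `N` i.i.d. samples from `P` is at
most `C·(𝕍(P,V) + S·B²·ln(2S/δ)/N)` for a universal constant `C`. -/
theorem stmt_8 :
    ∃ C : ℝ, 0 < C ∧
      ∀ (X : Type) [Fintype X] [DecidableEq X] [MeasurableSpace X]
        [MeasurableSingletonClass X]
        (Ω : Type) [MeasurableSpace Ω] (μ : Measure Ω) [IsProbabilityMeasure μ]
        (P : X → ℝ) (_ : ∀ x, 0 ≤ P x) (_ : ∑ x, P x = 1)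
        (B : ℝ) (_ : 0 < B) (V : X → ℝ) (_ : ∀ x, |V x| ≤ B)
        (N : ℕ) (_ : 1 ≤ N) (δ : ℝ) (_ : 0 < δ) (_ : δ < 1)
        (Y : Fin N → Ω → X) (_ : ∀ i, Measurable (Y i))
        (_ : iIndepFun Y μ)
        (_ : ∀ i x, (μ {ω | Y i ω = x}).toReal = P x),
        1 - δ ≤
          (μ {ω |
            (∑ x, (((Finset.univ.filter fun i : Fin N => Y i ω = x).card : ℝ) / N) * (V x)^2) -
              (∑ x, (((Finset.univ.filter fun i : Fin N => Y i ω = x).card : ℝ) / N) * V x)^2 ≤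
            C * (((∑ x, P x * (V x)^2) - (∑ x, P x * V x)^2) +
                (Fintype.card X) * B^2 * Real.log (2 * (Fintype.card X) / δ) / N)}).toReal := by
  refine ⟨6, by norm_num, ?_⟩
  intro X _ _ _ _ Ω _ μ _ P hP0 hP1 B hB V hV N hN δ hδ0 hδ1 Y hY hind hp
  have hNe : Nonempty X := by
    by_contra h
    rw [not_nonempty_iff] at h
    rw [Finset.univ_eq_empty, Finset.sum_empty] at hP1
    norm_num at hP1
  have hSpos : (0:ℝ) < (Fintype.card X : ℝ) := by
    exact_mod_cast Fintype.card_pos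
  have hS1 : (1:ℝ) ≤ (Fintype.card X : ℝ) := by
    exact_mod_cast Fintype.card_pos
  have hNpos : (0:ℝ) < (N:ℝ) := by exact_mod_cast hN
  set S : ℝ := (Fintype.card X : ℝ) with hSdef
  set L : ℝ := Real.log (2 * S / δ) with hLdef
  have hLpos : 0 < L := by
    apply Real.log_pos
    rw [lt_div_iff₀ hδ0]
    nlinarith
  have hlog2 : 0 < Real.log 2 := Real.log_pos one_lt_two
  set a : X → ℝ := fun x => 2 * N * P x + L / Real.log 2 with hadef
  set bad : X → Set Ω := fun x =>
    {ω | a x ≤ ((Finset.univ.filter fun i : Fin N => Y i ω = x).card : ℝ)} with hbaddef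
  have hbad : ∀ x, (μ (bad x)).toReal ≤ δ / (2 * S) := by
    intro x
    refine (chernoff_count μ Y hY hind x (P x) (hP0 x) (fun i => hp i x) (a x)).trans ?_
    have hexpand : -(Real.log 2) * a x + N * P x
        = (N * P x) * (1 - 2 * Real.log 2) - L := by
      rw [hadef]
      field_simp
      ring
    have hle : -(Real.log 2) * a x + N * P x ≤ -L := by
      rw [hexpand]
      nlinarith [mul_nonneg hNpos.le (hP0 x), Real.log_two_gt_d9]
    calc Real.exp (-(Real.log 2) * a x + N * P x) ≤ Real.exp (-L) := Real.exp_le_exp.2 hle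
      _ = δ / (2 * S) := by
        rw [hLdef, Real.exp_neg, Real.exp_log (by positivity), inv_div]
  have hUnion : (μ (⋃ x, bad x)).toReal ≤ δ / 2 := by
    have h1 : μ (⋃ x, bad x) ≤ ∑ x, μ (bad x) := measure_iUnion_fintype_le μ bad
    have hne : (∑ x, μ (bad x)) ≠ ⊤ := by
      refine (ENNReal.sum_lt_top.2 fun x _ => ?_).ne
      exact measure_lt_top μ _
    have h2 : (μ (⋃ x, bad x)).toReal ≤ (∑ x, μ (bad x)).toReal :=
      ENNReal.toReal_mono hne h1
    rw [ENNReal.toReal_sum (fun x _ => measure_ne_top μ _)] at h2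
    refine h2.trans ?_
    calc ∑ x, (μ (bad x)).toReal ≤ ∑ _x : X, δ / (2*S) :=
          Finset.sum_le_sum fun x _ => hbad x
      _ = S * (δ / (2*S)) := by
          rw [Finset.sum_const, Finset.card_univ, nsmul_eq_mul]
      _ = δ / 2 := by
          field_simp
  set T : Set Ω := {ω |
      (∑ x, (((Finset.univ.filter fun i : Fin N => Y i ω = x).card : ℝ) / N) * (V x)^2) -
        (∑ x, (((Finset.univ.filter fun i : Fin N => Y i ω = x).card : ℝ) / N) * V x)^2 ≤
      6 * (((∑ x, P x * (V x)^2) - (∑ x, P x * V x)^2) +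
          S * B^2 * L / N)} with hTdef
  have hincl : Tᶜ ⊆ ⋃ x, bad x := by
    intro ω hω
    by_contra hmem
    apply hω
    simp only [Set.mem_iUnion, not_exists] at hmem
    show (∑ x, (((Finset.univ.filter fun i : Fin N => Y i ω = x).card : ℝ) / N) * (V x)^2) -
        (∑ x, (((Finset.univ.filter fun i : Fin N => Y i ω = x).card : ℝ) / N) * V x)^2 ≤
      6 * (((∑ x, P x * (V x)^2) - (∑ x, P x * V x)^2) + S * B^2 * L / N)
    have hcount : ∀ x, ((Finset.univ.filter fun i : Fin N => Y i ω = x).card : ℝ) < a x := by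
      intro x
      by_contra hcon
      exact hmem x (not_lt.1 hcon)
    have hq1 : ∑ x, ((Finset.univ.filter fun i : Fin N => Y i ω = x).card : ℝ) / N = 1 := by
      have hnat : ∑ x, (Finset.univ.filter fun i : Fin N => Y i ω = x).card = N := by
        have h := Finset.card_eq_sum_card_fiberwise
          (s := (Finset.univ : Finset (Fin N))) (t := (Finset.univ : Finset X))
          (f := fun i => Y i ω) (fun i _ => Finset.mem_univ _)
        rw [Finset.card_univ, Fintype.card_fin] at h
        exact h.symm
      rw [← Finset.sum_div]
      rw [div_eq_one_iff_eq hNpos.ne']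
      exact_mod_cast hnat
    have hqP : ∀ x, ((Finset.univ.filter fun i : Fin N => Y i ω = x).card : ℝ) / N
        ≤ 2 * P x + L / Real.log 2 / N := by
      intro x
      rw [div_le_iff₀ hNpos]
      refine (hcount x).le.trans ?_
      rw [hadef]
      have : (2 * P x + L / Real.log 2 / N) * N = 2 * N * P x + L / Real.log 2 := by
        field_simp
      rw [this]
    have ht0 : 0 ≤ L / Real.log 2 / N := by positivity
    have key := detvar P
      (fun x => ((Finset.univ.filter fun i : Fin N => Y i ω = x).card : ℝ) / N) V B
      (L / Real.log 2 / N) hP0 hP1 hq1 hqP hV hB.le ht0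
    have hvarP : 0 ≤ (∑ x, P x * (V x)^2) - (∑ x, P x * V x)^2 := by
      have h0 : 0 ≤ ∑ x, P x * (V x - (∑ y, P y * V y))^2 :=
        Finset.sum_nonneg fun x _ => mul_nonneg (hP0 x) (sq_nonneg _)
      rw [expand_var P V hP1 (∑ y, P y * V y)] at h0
      simpa using h0
    have hfin : (L / Real.log 2 / N) * S * (4 * B^2) ≤ 6 * (S * B^2 * L / N) := by
      have hl23 : (2:ℝ)/3 ≤ Real.log 2 := by nlinarith [Real.log_two_gt_d9]
      rw [div_div, div_mul_eq_mul_div, div_mul_eq_mul_div,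
        show 6*(S*B^2*L/(N:ℝ)) = 6*(S*B^2*L)/(N:ℝ) from by ring,
        div_le_div_iff₀ (by positivity) hNpos]
      have hbig : 0 ≤ L * S * B^2 * N :=
        mul_nonneg (mul_nonneg (mul_nonneg hLpos.le hSpos.le) (sq_nonneg B)) hNpos.le
      nlinarith [mul_nonneg hbig (show (0:ℝ) ≤ Real.log 2 - 2/3 by linarith)]
    linarith
  have h2 : μ Tᶜ ≤ μ (⋃ x, bad x) := measure_mono hincl
  have h3 : (1:ℝ) ≤ (μ T).toReal + (μ Tᶜ).toReal := by
    have h4 : μ Set.univ ≤ μ T + μ Tᶜ := by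
      rw [← Set.union_compl_self T]
      exact measure_union_le T Tᶜ
    have h5 := ENNReal.toReal_mono
      (ENNReal.add_ne_top.2 ⟨measure_ne_top _ _, measure_ne_top _ _⟩) h4
    rw [measure_univ, ENNReal.toReal_one,
      ENNReal.toReal_add (measure_ne_top _ _) (measure_ne_top _ _)] at h5
    exact h5
  have h6 : (μ Tᶜ).toReal ≤ δ/2 :=
    (ENNReal.toReal_mono (measure_ne_top _ _) h2).trans hUnion
  linarith
end

section
/- In the finite-horizon MDP setup, let P̂ be any collection of probability vectors P̂_{s,a} on 𝒮₊ (one for each state-action pair), let b(s,a) ≥ 0 be arbitrary nonnegative bonus values, and define V̂, Q̂, π̂ by the backward recursion V̂_{H+1} = c_f, Q̂_h(s,a) = max{0, c(s,a) + P̂_{s,a}V̂_{h+1} − b_h(s,a)}, V̂_h(s) = min_a Q̂_h(s,a), π̂(s,h) ∈ argmin_a Q̂_h(s,a), where b_h(s,a) is the bonus used at stage h. Then for every (s̄,h̄) ∈ 𝒮₊ × {1,…,H}: |V^{π̂}_{h̄}(s̄) − V̂_{h̄}(s̄)| ≤ Σ_{h=h̄}^{H} Σ_{(s,a)} q_{π̂,(s̄,h̄)}(s,a,h)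 · ( |(P_{s,a} − P̂_{s,a})V̂_{h+1}| + b_h(s,a) ), where V^{π̂} is the value of π̂ under the true kernel P. -/
open Finset

/-- Expectation of `V` under the (sub)probability vector `Q` on a finite set. -/
noncomputable def mdpExp {S : Type} [Fintype S] (Q V : S → ℝ) : ℝ := ∑ s, Q s * V s

/-- Value functions of a deterministic policy `π : S → ℕ → A` (a function of state and
stage), indexed from the end: `polV c P cf π H k = V^π_{H+1-k}`. -/
noncomputable def polV {S A : Type} [Fintype S]
    (c : S → A → ℝ) (P : S → A → S → ℝ) (cf : S → ℝ) (π : S → ℕ → A) (H : ℕ) : ℕ → S → ℝ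
  | 0 => cf
  | k + 1 => fun s => c s (π s (H - k)) + mdpExp (P s (π s (H - k))) (polV c P cf π H k)

/-- Occupancy measure of policy `π` started at state `sb` and stage `hb`, under the true
kernel `P`: `occ P π sb hb j s a = q_{π,(sb,hb)}(s,a,hb+j)`. -/
noncomputable def occ {S A : Type} [Fintype S] [Fintype A] [DecidableEq S] [DecidableEq A]
    (P : S → A → S → ℝ) (π : S → ℕ → A) (sb : S) (hb : ℕ) : ℕ → S → A → ℝ
  | 0 => fun s a => if s = sb ∧ a = π sb hb then 1 else 0
  | j + 1 => fun s a =>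
      if a = π s (hb + j + 1) then ∑ p : S × A, occ P π sb hb j p.1 p.2 * P p.1 p.2 s else 0

/-- Lower-confidence value iteration with an arbitrary stage-dependent bonus `bon h s a`,
indexed from the end: `lcbV c Phat bon cf H k = V̂_{H+1-k}`, so
`lcbV c Phat bon cf H 0 = c_f` and, for `h = H - k`,
`V̂_h(s) = min_a max{0, c(s,a) + P̂_{s,a} V̂_{h+1} − bon h s a}`. -/
noncomputable def lcbV {S A : Type} [Fintype S] [Fintype A] [Nonempty A]
    (c : S → A → ℝ) (Phat : S → A → S → ℝ) (bon : ℕ → S → A → ℝ)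
    (cf : S → ℝ) (H : ℕ) : ℕ → S → ℝ
  | 0 => cf
  | k + 1 => fun s => ⨅ a, max 0
      (c s a + mdpExp (Phat s a) (lcbV c Phat bon cf H k) - bon (H - k) s a)

/-- The corresponding action-value estimates: `lcbQ c Phat bon cf H h s a = Q̂_h(s,a)
= max{0, c(s,a) + P̂_{s,a} V̂_{h+1} − bon h s a}`, where `V̂_{h+1} = lcbV c Phat bon cf H (H-h)`. -/
noncomputable def lcbQ {S A : Type} [Fintype S] [Fintype A] [Nonempty A]
    (c : S → A → ℝ) (Phat : S → A → S → ℝ) (bon : ℕ → S → A → ℝ)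
    (cf : S → ℝ) (H : ℕ) (h : ℕ) (s : S) (a : A) : ℝ :=
  max 0 (c s a + mdpExp (Phat s a) (lcbV c Phat bon cf H (H - h)) - bon h s a)

section Aux

variable {S A : Type} [Fintype S] [Fintype A] [Nonempty A] [DecidableEq S] [DecidableEq A]

lemma polV_nonneg (c : S → A → ℝ) (P : S → A → S → ℝ) (cf : S → ℝ) (π : S → ℕ → A) (H : ℕ)
    (hc0 : ∀ s a, 0 ≤ c s a) (hP0 : ∀ s a s', 0 ≤ P s a s') (hcf : ∀ s, 0 ≤ cf s) :
    ∀ k s, 0 ≤ polV c P cf π H k s := by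
  intro k
  induction k with
  | zero => exact hcf
  | succ k ih =>
    intro s
    have h1 : 0 ≤ mdpExp (P s (π s (H - k))) (polV c P cf π H k) :=
      Finset.sum_nonneg fun s' _ => mul_nonneg (hP0 _ _ _) (ih s')
    have h2 := hc0 s (π s (H - k))
    show 0 ≤ c s (π s (H - k)) + mdpExp (P s (π s (H - k))) (polV c P cf π H k)
    linarith

lemma occ_nonneg (P : S → A → S → ℝ) (π : S → ℕ → A) (sb : S) (hb : ℕ)
    (hP0 : ∀ s a s', 0 ≤ P s a s') :
    ∀ j s a, 0 ≤ occ P π sb hb j s a := by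
  intro j
  induction j with
  | zero => intro s a; simp only [occ]; positivity
  | succ j ih =>
    intro s a
    simp only [occ]
    split
    · exact Finset.sum_nonneg fun p _ => mul_nonneg (ih p.1 p.2) (hP0 _ _ _)
    · exact le_refl _

lemma occ_decomp (P : S → A → S → ℝ) (π : S → ℕ → A) (sb : S) (hb : ℕ) :
    ∀ j s a, occ P π sb hb (j + 1) s a =
      ∑ s', P sb (π sb hb) s' * occ P π s' (hb + 1) j s a := by
  intro j
  induction j with
  | zero =>
    intro s a
    simp only [occ]
    rw [Fintype.sum_prod_type]
    by_cases h : a = π s (hb + 0 + 1)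
    · simp only [h, if_true]
      have : ∀ s₁ : S, ∑ a₁ : A, (if s₁ = sb ∧ a₁ = π sb hb then (1:ℝ) else 0) * P s₁ a₁ s
          = if s₁ = sb then P sb (π sb hb) s else 0 := by
        intro s₁
        by_cases hs : s₁ = sb
        · subst hs
          simp [Finset.sum_ite_eq']
        · simp [hs]
      rw [Finset.sum_congr rfl fun s₁ _ => this s₁]
      simp only [Finset.sum_ite_eq']
      have : ∀ s' : S, P sb (π sb hb) s' * (if s = s' ∧ π s (hb + 0 + 1) = π s' (hb + 1) then (1:ℝ) else 0)
          = if s' = s then P sb (π sb hb) s else 0 := by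
        intro s'
        by_cases hs : s' = s
        · subst hs; simp
        · have : ¬(s = s') := fun h => hs h.symm
          simp [hs, this]
      rw [Finset.sum_congr rfl fun s' _ => this s']
      simp
    · simp only [h, if_false]
      symm
      apply Finset.sum_eq_zero
      intro s' _
      have : ¬(s = s' ∧ a = π s' (hb + 1)) := by
        rintro ⟨rfl, ha⟩
        exact h (by simpa using ha)
      simp [this]
  | succ j ih =>
    intro s a
    show (if a = π s (hb + (j+1) + 1) then
        ∑ p : S × A, occ P π sb hb (j+1) p.1 p.2 * P p.1 p.2 s else 0) = _
    have hrhs : ∀ s' : S, occ P π s' (hb + 1) (j + 1) s a =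
        if a = π s (hb + 1 + j + 1) then
          ∑ p : S × A, occ P π s' (hb + 1) j p.1 p.2 * P p.1 p.2 s else 0 := fun s' => rfl
    by_cases h : a = π s (hb + (j+1) + 1)
    · have h' : a = π s (hb + 1 + j + 1) := by
        convert h using 3; omega
      rw [if_pos h]
      have lhs_eq : ∑ p : S × A, occ P π sb hb (j+1) p.1 p.2 * P p.1 p.2 s
          = ∑ s' : S, P sb (π sb hb) s' *
              ∑ p : S × A, occ P π s' (hb+1) j p.1 p.2 * P p.1 p.2 s := by
        calc ∑ p : S × A, occ P π sb hb (j+1) p.1 p.2 * P p.1 p.2 s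
            = ∑ p : S × A, ∑ s' : S,
                P sb (π sb hb) s' * occ P π s' (hb+1) j p.1 p.2 * P p.1 p.2 s := by
              refine Finset.sum_congr rfl fun p _ => ?_
              rw [ih, Finset.sum_mul]
          _ = ∑ s' : S, ∑ p : S × A,
                P sb (π sb hb) s' * occ P π s' (hb+1) j p.1 p.2 * P p.1 p.2 s :=
              Finset.sum_comm
          _ = _ := by
              refine Finset.sum_congr rfl fun s' _ => ?_
              rw [Finset.mul_sum]
              exact Finset.sum_congr rfl fun p _ => by ring
      rw [lhs_eq]
      refine Finset.sum_congr rfl fun s' _ => ?_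
      rw [hrhs s', if_pos h']
    · have h' : ¬ a = π s (hb + 1 + j + 1) := by
        intro hc; apply h; convert hc using 3; omega
      simp only [h, if_false, hrhs, h', if_false, mul_zero, Finset.sum_const_zero]

lemma lcbV_greedy (c : S → A → ℝ) (Phat : S → A → S → ℝ) (bon : ℕ → S → A → ℝ)
    (cf : S → ℝ) (H : ℕ) (πhat : S → ℕ → A)
    (hgreedy : ∀ s h a, lcbQ c Phat bon cf H h s (πhat s h) ≤ lcbQ c Phat bon cf H h s a)
    (k : ℕ) (hk : k ≤ H) (s : S) :
    lcbV c Phat bon cf H (k + 1) s = lcbQ c Phat bon cf H (H - k) s (πhat s (H - k)) := by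
  have hkk : H - (H - k) = k := by omega
  have hbody : ∀ a, lcbQ c Phat bon cf H (H - k) s a =
      max 0 (c s a + mdpExp (Phat s a) (lcbV c Phat bon cf H k) - bon (H - k) s a) := by
    intro a; rw [lcbQ, hkk]
  have : lcbV c Phat bon cf H (k + 1) s = ⨅ a, lcbQ c Phat bon cf H (H - k) s a := by
    show (⨅ a, max 0 (c s a + mdpExp (Phat s a) (lcbV c Phat bon cf H k) - bon (H - k) s a)) = _
    exact iInf_congr fun a => (hbody a).symm
  rw [this]
  refine le_antisymm (ciInf_le (Set.Finite.bddBelow (Set.finite_range _)) _)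
    (le_ciInf fun a => hgreedy s (H - k) a)

lemma sum3_swap (f : S → A → S → ℝ) :
    ∑ s, ∑ a, ∑ s', f s a s' = ∑ s', ∑ s, ∑ a, f s a s' := by
  calc ∑ s, ∑ a, ∑ s', f s a s'
      = ∑ s, ∑ s', ∑ a, f s a s' := Finset.sum_congr rfl fun s _ => Finset.sum_comm
    _ = ∑ s', ∑ s, ∑ a, f s a s' := Finset.sum_comm

lemma occ_sum_decomp (P : S → A → S → ℝ) (π : S → ℕ → A) (sb : S) (hb H : ℕ)
    (W : ℕ → S → A → ℝ) (hhb : hb ≤ H) :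
    ∑ h ∈ Finset.Icc hb H, ∑ s, ∑ a, occ P π sb hb (h - hb) s a * W h s a
      = W hb sb (π sb hb) + ∑ s', P sb (π sb hb) s' *
          ∑ h ∈ Finset.Icc (hb + 1) H, ∑ s, ∑ a,
            occ P π s' (hb + 1) (h - (hb + 1)) s a * W h s a := by
  have hIns : Finset.Icc hb H = insert hb (Finset.Icc (hb + 1) H) := by
    ext x; simp only [Finset.mem_Icc, Finset.mem_insert]; omega
  rw [hIns, Finset.sum_insert (by simp only [Finset.mem_Icc]; omega)]
  congr 1
  · -- head term
    rw [Nat.sub_self]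
    have inner : ∀ s : S, (∑ a, occ P π sb hb 0 s a * W hb s a)
        = if s = sb then W hb s (π sb hb) else 0 := by
      intro s
      by_cases hs : s = sb
      · subst hs
        simp only [occ, true_and, if_true, ite_mul, one_mul, zero_mul]
        simp [Finset.sum_ite_eq']
      · simp [occ, hs]
    rw [Finset.sum_congr rfl fun s _ => inner s]
    simp [Finset.sum_ite_eq']
  · -- tail term
    calc ∑ h ∈ Finset.Icc (hb + 1) H, ∑ s, ∑ a, occ P π sb hb (h - hb) s a * W h s a
        = ∑ h ∈ Finset.Icc (hb + 1) H, ∑ s', P sb (π sb hb) s' *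
            ∑ s, ∑ a, occ P π s' (hb + 1) (h - (hb + 1)) s a * W h s a := by
          refine Finset.sum_congr rfl fun h hh => ?_
          have hhm : hb + 1 ≤ h := (Finset.mem_Icc.mp hh).1
          have hj : h - hb = (h - (hb + 1)) + 1 := by omega
          rw [hj]
          calc ∑ s, ∑ a, occ P π sb hb ((h - (hb + 1)) + 1) s a * W h s a
              = ∑ s, ∑ a, ∑ s', P sb (π sb hb) s' *
                  occ P π s' (hb + 1) (h - (hb + 1)) s a * W h s a := by
                refine Finset.sum_congr rfl fun s _ => Finset.sum_congr rfl fun a _ => ?_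
                rw [occ_decomp, Finset.sum_mul]
            _ = ∑ s', ∑ s, ∑ a, P sb (π sb hb) s' *
                  occ P π s' (hb + 1) (h - (hb + 1)) s a * W h s a := sum3_swap _
            _ = _ := by
                refine Finset.sum_congr rfl fun s' _ => ?_
                rw [Finset.mul_sum]
                refine Finset.sum_congr rfl fun s _ => ?_
                rw [Finset.mul_sum]
                exact Finset.sum_congr rfl fun a _ => by ring
      _ = _ := by
          rw [Finset.sum_comm]
          exact Finset.sum_congr rfl fun s' _ => by rw [← Finset.mul_sum]

end Aux

/-- Lemma `d hatV` of the paper (deterministic): for any empirical kernel `Phat` of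
probability vectors, any nonnegative bonuses, and the greedy policy `π̂` of the induced
backward recursion, for every start `(s̄,h̄)` with `1 ≤ h̄ ≤ H`,
`|V^{π̂}_{h̄}(s̄) − V̂_{h̄}(s̄)|
  ≤ Σ_{h=h̄}^{H} Σ_{(s,a)} q_{π̂,(s̄,h̄)}(s,a,h) (|(P_{s,a} − P̂_{s,a}) V̂_{h+1}| + bon h s a)`. -/


theorem stmt_12 (S A : Type) [Fintype S] [Fintype A] [Nonempty A]
    [DecidableEq S] [DecidableEq A]
    (g : S)
    (c : S → A → ℝ) (hc0 : ∀ s a, 0 ≤ c s a) (hc1 : ∀ s a, c s a ≤ 1)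
    (hcg : ∀ a, c g a = 0)
    (P : S → A → S → ℝ) (hP0 : ∀ s a s', 0 ≤ P s a s')
    (hPsum : ∀ s a, ∑ s', P s a s' = 1) (hPg : ∀ a, P g a g = 1)
    (H : ℕ) (hH : 1 ≤ H)
    (cf : S → ℝ) (hcf : ∀ s, 0 ≤ cf s) (hcfg : cf g = 0)
    (Phat : S → A → S → ℝ) (hPhat0 : ∀ s a s', 0 ≤ Phat s a s')
    (hPhatsum : ∀ s a, ∑ s', Phat s a s' = 1)
    (bon : ℕ → S → A → ℝ) (hbon : ∀ h s a, 0 ≤ bon h s a)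
    (πhat : S → ℕ → A)
    (hgreedy : ∀ s h a, lcbQ c Phat bon cf H h s (πhat s h) ≤ lcbQ c Phat bon cf H h s a) :
    ∀ sb : S, ∀ hb : ℕ, 1 ≤ hb → hb ≤ H →
      |polV c P cf πhat H (H + 1 - hb) sb - lcbV c Phat bon cf H (H + 1 - hb) sb| ≤
        ∑ h ∈ Finset.Icc hb H, ∑ s, ∑ a,
          occ P πhat sb hb (h - hb) s a *
            (|mdpExp (fun s' => P s a s' - Phat s a s') (lcbV c Phat bon cf H (H - h))| +
              bon h s a) := by
  suffices key : ∀ k hb, hb + k = H + 1 → ∀ sb,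
      |polV c P cf πhat H k sb - lcbV c Phat bon cf H k sb| ≤
        ∑ h ∈ Finset.Icc hb H, ∑ s, ∑ a,
          occ P πhat sb hb (h - hb) s a *
            (|mdpExp (fun s' => P s a s' - Phat s a s') (lcbV c Phat bon cf H (H - h))| +
              bon h s a) by
    intro sb hb hb1 hbH
    exact key (H + 1 - hb) hb (by omega) sb
  intro k
  induction k with
  | zero =>
    intro hb hbk sb
    have hbe : hb = H + 1 := by omega
    subst hbe
    rw [Finset.Icc_eq_empty (by omega)]
    simp [polV, lcbV]
  | succ k ih =>
    intro hb hbk sb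
    have hk : k ≤ H := by omega
    have hhb : H - k = hb := by omega
    set a0 := πhat sb hb with ha0
    set Vp := polV c P cf πhat H k with hVp
    set Vh := lcbV c Phat bon cf H k with hVh
    set X := mdpExp (fun s' => P sb a0 s' - Phat sb a0 s') Vh with hX
    set E := ∑ s', P sb a0 s' * |Vp s' - Vh s'| with hE
    have hpol : polV c P cf πhat H (k + 1) sb = c sb a0 + mdpExp (P sb a0) Vp := by
      show c sb (πhat sb (H - k)) + mdpExp (P sb (πhat sb (H - k))) Vp = _
      rw [hhb]
    have hlcb : lcbV c Phat bon cf H (k + 1) sb =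
        max 0 (c sb a0 + mdpExp (Phat sb a0) Vh - bon hb sb a0) := by
      rw [lcbV_greedy c Phat bon cf H πhat hgreedy k hk sb, hhb, lcbQ,
        show H - hb = k by omega]
    have hsplit : mdpExp (P sb a0) Vp - mdpExp (Phat sb a0) Vh =
        (∑ s', P sb a0 s' * (Vp s' - Vh s')) + X := by
      simp only [mdpExp, hX]
      rw [← Finset.sum_sub_distrib, ← Finset.sum_add_distrib]
      exact Finset.sum_congr rfl fun s' _ => by ring
    have habs : |∑ s', P sb a0 s' * (Vp s' - Vh s')| ≤ E := by
      refine le_trans (Finset.abs_sum_le_sum_abs _ _) (le_of_eq ?_)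
      exact Finset.sum_congr rfl fun s' _ => by
        rw [abs_mul, abs_of_nonneg (hP0 _ _ _)]
    have hkey : |polV c P cf πhat H (k + 1) sb - lcbV c Phat bon cf H (k + 1) sb| ≤
        |X| + bon hb sb a0 + E := by
      rw [hpol, hlcb]
      rcases le_or_gt 0 (c sb a0 + mdpExp (Phat sb a0) Vh - bon hb sb a0) with hpos | hneg
      · rw [max_eq_right hpos]
        have heq : c sb a0 + mdpExp (P sb a0) Vp -
            (c sb a0 + mdpExp (Phat sb a0) Vh - bon hb sb a0) =
            ((∑ s', P sb a0 s' * (Vp s' - Vh s')) + X) + bon hb sb a0 := by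
          linear_combination hsplit
        rw [heq]
        have h1 := abs_add_le ((∑ s', P sb a0 s' * (Vp s' - Vh s')) + X) (bon hb sb a0)
        have h2 := abs_add_le (∑ s', P sb a0 s' * (Vp s' - Vh s')) X
        have h3 := abs_of_nonneg (hbon hb sb a0)
        linarith
      · rw [max_eq_left hneg.le, sub_zero]
        have hnn : 0 ≤ c sb a0 + mdpExp (P sb a0) Vp := by
          refine add_nonneg (hc0 _ _) (Finset.sum_nonneg fun s' _ => ?_)
          exact mul_nonneg (hP0 _ _ _) (polV_nonneg c P cf πhat H hc0 hP0 hcf k s')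
        rw [abs_of_nonneg hnn]
        have h1 : ∑ s', P sb a0 s' * (Vp s' - Vh s') ≤ E :=
          le_trans (le_abs_self _) habs
        have h2 := le_abs_self X
        linarith
    rw [occ_sum_decomp P πhat sb hb H _ (by omega : hb ≤ H), ← ha0,
      show H - hb = k by omega, ← hVh, ← hX]
    have hE_le : E ≤ ∑ s', P sb a0 s' *
        ∑ h ∈ Finset.Icc (hb + 1) H, ∑ s, ∑ a,
          occ P πhat s' (hb + 1) (h - (hb + 1)) s a *
            (|mdpExp (fun s'' => P s a s'' - Phat s a s'') (lcbV c Phat bon cf H (H - h))| +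
              bon h s a) := by
      refine Finset.sum_le_sum fun s' _ => ?_
      exact mul_le_mul_of_nonneg_left (ih (hb + 1) (by omega) s') (hP0 _ _ _)
    linarith
end
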